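/- arXiv:2509.00525 — 2 statements merged into one kernel-verified Lean document; each statement's English description precedes it below -/
import Mathlib

section
/- Let F : N1 → N2 be a local diffeomorphism between smooth connected manifolds. Then F has the path-lifting property (every continuous piecewise-smooth path α : [0,1] → N2 with a chosen preimage x0 of α(0) admits a continuous lift ᾱ : [0,1] → N1 with ᾱ(0) = x0 and F ∘ ᾱ = α) if and only if F has the path-continuation property (every partial lift defined on [0,b) has a sequence of parameters tending to b along which it converges in N1). -/
open Set Filter Topology
open scoped Manifold

/-- A path `α : ℝ → M` is a path in the sense of the paper on `[0,1]`: continuous and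
piecewise smooth, i.e. smooth on each interval of some partition `0 = t₀ < ⋯ < tₙ = 1`. -/
def PiecewiseSmoothOn {E : Type*} [NormedAddCommGroup E] [NormedSpace ℝ E]
    {H : Type*} [TopologicalSpace H] (I : ModelWithCorners ℝ E H)
    {M : Type*} [TopologicalSpace M] [ChartedSpace H M]
    (γ : ℝ → M) : Prop :=
  ContinuousOn γ (Icc 0 1) ∧
    ∃ (n : ℕ) (t : Fin (n + 1) → ℝ), StrictMono t ∧ t 0 = 0 ∧ t (Fin.last n) = 1 ∧
      ∀ i : Fin n, ContMDiffOn 𝓘(ℝ, ℝ) I (⊤ : ℕ∞) γ (Icc (t i.castSucc) (t i.succ))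

section Aux

variable {E₁ : Type*} [NormedAddCommGroup E₁] [NormedSpace ℝ E₁]
    {H₁ : Type*} [TopologicalSpace H₁] {I₁ : ModelWithCorners ℝ E₁ H₁}
    {N₁ : Type*} [TopologicalSpace N₁] [ChartedSpace H₁ N₁]
    {E₂ : Type*} [NormedAddCommGroup E₂] [NormedSpace ℝ E₂]
    {H₂ : Type*} [TopologicalSpace H₂] {I₂ : ModelWithCorners ℝ E₂ H₂}
    {N₂ : Type*} [TopologicalSpace N₂] [ChartedSpace H₂ N₂]
    {F : N₁ → N₂}

lemma exists_partialHomeomorph (hF : IsLocalDiffeomorph I₁ I₂ (⊤ : ℕ∞) F) (x : N₁) :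
    ∃ P : OpenPartialHomeomorph N₁ N₂, x ∈ P.source ∧ EqOn F P P.source := by
  obtain ⟨Φ, hx, hFΦ⟩ := hF x
  exact ⟨Φ.toOpenPartialHomeomorph, hx, hFΦ⟩

/-- Uniqueness of lifts through a local diffeomorphism on a preconnected set. -/
lemma lift_eqOn [T2Space N₁] (hF : IsLocalDiffeomorph I₁ I₂ (⊤ : ℕ∞) F)
    {s : Set ℝ} (hs : IsPreconnected s)
    {g h : ℝ → N₁} (hg : ContinuousOn g s) (hh : ContinuousOn h s)
    (hFgh : ∀ t ∈ s, F (g t) = F (h t)) {a : ℝ} (ha : a ∈ s) (hgha : g a = h a) :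
    EqOn g h s := by
  haveI := Subtype.preconnectedSpace hs
  set G : s → N₁ := s.restrict g with hG
  set H' : s → N₁ := s.restrict h with hH
  have hGc : Continuous G := continuousOn_iff_continuous_restrict.mp hg
  have hHc : Continuous H' := continuousOn_iff_continuous_restrict.mp hh
  have hclopen : IsClopen {y : s | G y = H' y} := by
    constructor
    · exact isClosed_eq hGc hHc
    · rw [isOpen_iff_mem_nhds]
      intro y hy
      obtain ⟨P, hyP, hFP⟩ := exists_partialHomeomorph hF (G y)
      have hyP' : H' y ∈ P.source := hy ▸ hyP
      have hU : (G ⁻¹' P.source ∩ H' ⁻¹' P.source) ∈ 𝓝 y :=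
        Filter.inter_mem ((P.open_source.preimage hGc).mem_nhds hyP)
          ((P.open_source.preimage hHc).mem_nhds hyP')
      refine Filter.mem_of_superset hU ?_
      rintro z ⟨hz1, hz2⟩
      have : P (G z) = P (H' z) := by
        rw [← hFP hz1, ← hFP hz2]
        exact hFgh z z.2
      exact P.injOn hz1 hz2 this
  have huniv : {y : s | G y = H' y} = univ :=
    hclopen.eq_univ ⟨⟨a, ha⟩, hgha⟩
  intro t ht
  have : (⟨t, ht⟩ : s) ∈ {y : s | G y = H' y} := huniv ▸ mem_univ _
  exact this

/-- Gluing two continuous functions at a point. -/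
lemma glue_continuousOn {X : Type*} [TopologicalSpace X] {f g : ℝ → X} {a : ℝ} {s : Set ℝ}
    (hf : ContinuousOn f (s ∩ Iic a)) (hg : ContinuousOn g (s ∩ Ici a))
    (hfg : f a = g a) :
    ContinuousOn (fun t => if t ≤ a then f t else g t) s := by
  intro t ht
  set φ : ℝ → X := fun t => if t ≤ a then f t else g t with hφ
  rcases lt_trichotomy t a with hta | rfl | hat
  · have h1 : ContinuousWithinAt f (s ∩ Iio a) t :=
      (hf.mono (inter_subset_inter_right _ Iio_subset_Iic_self)) t ⟨ht, hta⟩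
    have h2 : ContinuousWithinAt φ (s ∩ Iio a) t := by
      refine h1.congr (fun u hu => ?_) ?_
      · show (if u ≤ a then f u else g u) = f u
        rw [if_pos (le_of_lt (mem_Iio.mp hu.2))]
      · show (if t ≤ a then f t else g t) = f t
        rw [if_pos hta.le]
    rw [ContinuousWithinAt, nhdsWithin_restrict' s (Iio_mem_nhds hta)]
    exact h2
  · have h1 : ContinuousWithinAt φ (s ∩ Iic t) t := by
      refine ((hf t ⟨ht, le_refl t⟩).congr (fun u hu => ?_) ?_)
      · show (if u ≤ t then f u else g u) = f u
        rw [if_pos (mem_Iic.mp hu.2)]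
      · show (if t ≤ t then f t else g t) = f t
        rw [if_pos le_rfl]
    have h2 : ContinuousWithinAt φ (s ∩ Ici t) t := by
      refine ((hg t ⟨ht, le_refl t⟩).congr (fun u hu => ?_) ?_)
      · show (if u ≤ t then f u else g u) = g u
        rcases eq_or_lt_of_le (mem_Ici.mp hu.2) with hu2 | hu2
        · rw [if_pos hu2.symm.le, ← hu2, hfg]
        · rw [if_neg (not_le.mpr hu2)]
      · show (if t ≤ t then f t else g t) = g t
        rw [if_pos le_rfl, hfg]
    have := h1.union h2
    rw [← inter_union_distrib_left, Iic_union_Ici, inter_univ] at this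
    exact this
  · have h1 : ContinuousWithinAt g (s ∩ Ioi a) t :=
      (hg.mono (inter_subset_inter_right _ Ioi_subset_Ici_self)) t ⟨ht, hat⟩
    have h2 : ContinuousWithinAt φ (s ∩ Ioi a) t := by
      refine h1.congr (fun u hu => ?_) ?_
      · show (if u ≤ a then f u else g u) = g u
        rw [if_neg (not_le.mpr (mem_Ioi.mp hu.2))]
      · show (if t ≤ a then f t else g t) = g t
        rw [if_neg (not_le.mpr hat)]
    rw [ContinuousWithinAt, nhdsWithin_restrict' s (Ioi_mem_nhds hat)]
    exact h2

/-- Local lifting through a local diffeomorphism. -/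
lemma lift_near (hF : IsLocalDiffeomorph I₁ I₂ (⊤ : ℕ∞) F) {α : ℝ → N₂} (x : N₁) :
    ∃ (U : Set N₁) (V : Set N₂) (β : ℝ → N₁), IsOpen U ∧ x ∈ U ∧ IsOpen V ∧ F x ∈ V ∧
      (∀ u : Set ℝ, MapsTo α u V → ContinuousOn α u → ContinuousOn β u) ∧
      (∀ t, α t ∈ V → F (β t) = α t) ∧
      (∀ y ∈ U, ∀ t, F y = α t → β t = y) := by
  obtain ⟨P, hxP, hFP⟩ := exists_partialHomeomorph hF x
  refine ⟨P.source, P.target, fun t => P.symm (α t), P.open_source, hxP, P.open_target,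
    by rw [hFP hxP]; exact P.map_source hxP, ?_, ?_, ?_⟩
  · intro u hmaps hcont
    exact P.continuousOn_symm.comp hcont hmaps
  · intro t htV
    rw [hFP (P.map_target htV)]
    exact P.right_inv htV
  · intro y hy t hyt
    show P.symm (α t) = y
    rw [← hyt, hFP hy]
    exact P.left_inv hy

end Aux

theorem localDiffeo_pathLifting_iff_pathContinuation'
    {E₁ : Type*} [NormedAddCommGroup E₁] [NormedSpace ℝ E₁]
    {H₁ : Type*} [TopologicalSpace H₁] (I₁ : ModelWithCorners ℝ E₁ H₁)
    {N₁ : Type*} [TopologicalSpace N₁] [ChartedSpace H₁ N₁] [IsManifold I₁ (⊤ : ℕ∞) N₁]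
    {E₂ : Type*} [NormedAddCommGroup E₂] [NormedSpace ℝ E₂]
    {H₂ : Type*} [TopologicalSpace H₂] (I₂ : ModelWithCorners ℝ E₂ H₂)
    {N₂ : Type*} [TopologicalSpace N₂] [ChartedSpace H₂ N₂] [IsManifold I₂ (⊤ : ℕ∞) N₂]
    [ConnectedSpace N₁] [ConnectedSpace N₂] [T2Space N₁] [T2Space N₂]
    (F : N₁ → N₂) (hF : IsLocalDiffeomorph I₁ I₂ (⊤ : ℕ∞) F)
    (PSm : (ℝ → N₂) → Prop) (hPSm : ∀ α, PSm α → ContinuousOn α (Icc 0 1)) :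
    (∀ α : ℝ → N₂, PSm α →
      ∀ x₀ : N₁, F x₀ = α 0 →
        ∃ ᾱ : ℝ → N₁, ContinuousOn ᾱ (Icc 0 1) ∧ ᾱ 0 = x₀ ∧
          ∀ t ∈ Icc (0 : ℝ) 1, F (ᾱ t) = α t)
    ↔
    (∀ α : ℝ → N₂, PSm α →
      ∀ b : ℝ, 0 < b → b ≤ 1 →
        ∀ ᾱ : ℝ → N₁, ContinuousOn ᾱ (Ico 0 b) →
          (∀ t ∈ Ico (0 : ℝ) b, F (ᾱ t) = α t) →
          ∃ (u : ℕ → ℝ) (x : N₁), (∀ k, u k ∈ Ico (0 : ℝ) b) ∧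
            Tendsto u atTop (𝓝 b) ∧ Tendsto (fun k => ᾱ (u k)) atTop (𝓝 x)) := by
  constructor
  · -- path-lifting ⇒ path-continuation
    intro hlift α hα b hb0 hb1 ᾱ hᾱc hᾱF
    obtain ⟨β, hβc, hβ0, hβF⟩ := hlift α hα (ᾱ 0) (hᾱF 0 ⟨le_rfl, hb0⟩)
    have hsub : Ico (0:ℝ) b ⊆ Icc 0 1 := fun t ht => ⟨ht.1, le_trans ht.2.le hb1⟩
    have heq : EqOn ᾱ β (Ico 0 b) :=
      lift_eqOn hF isPreconnected_Ico hᾱc (hβc.mono hsub)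
        (fun t ht => by rw [hᾱF t ht, hβF t (hsub ht)]) ⟨le_rfl, hb0⟩ (by rw [hβ0])
    have hmem : ∀ k : ℕ, b - b / ((k:ℝ) + 2) ∈ Ico (0:ℝ) b := by
      intro k
      have hk0 : (0:ℝ) ≤ (k:ℝ) := Nat.cast_nonneg k
      have hdiv_lt : b / ((k:ℝ) + 2) < b := div_lt_self hb0 (by linarith)
      have hdiv_pos : 0 < b / ((k:ℝ) + 2) := div_pos hb0 (by linarith)
      exact ⟨by linarith, by linarith⟩
    have hu : Tendsto (fun k : ℕ => b - b / ((k:ℝ) + 2)) atTop (𝓝 b) := by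
      have h2 : Tendsto (fun k : ℕ => (k:ℝ) + 2) atTop atTop :=
        tendsto_atTop_add_const_right atTop 2 tendsto_natCast_atTop_atTop
      have h1 : Tendsto (fun k : ℕ => b / ((k:ℝ) + 2)) atTop (𝓝 0) :=
        Tendsto.div_atTop tendsto_const_nhds h2
      have h3 : Tendsto (fun k : ℕ => b - b / ((k:ℝ) + 2)) atTop (𝓝 (b - 0)) :=
        (tendsto_const_nhds (x := b) (f := atTop)).sub h1
      simpa using h3
    refine ⟨fun k => b - b / ((k:ℝ) + 2), β b, hmem, hu, ?_⟩
    have htend : Tendsto (fun k : ℕ => b - b / ((k:ℝ) + 2)) atTop (𝓝[Icc 0 1] b) :=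
      tendsto_nhdsWithin_of_tendsto_nhds_of_eventually_within _ hu
        (Eventually.of_forall fun k => hsub (hmem k))
    have hβtend : Tendsto (fun k : ℕ => β (b - b / ((k:ℝ) + 2))) atTop (𝓝 (β b)) :=
      ((hβc b ⟨hb0.le, hb1⟩).tendsto).comp htend
    exact hβtend.congr (fun k => (heq (hmem k)).symm)
  · -- path-continuation ⇒ path-lifting
    intro hcont α hα x₀ hx₀
    set S : Set ℝ := {b | b ∈ Icc (0:ℝ) 1 ∧ ∃ γ : ℝ → N₁,
        ContinuousOn γ (Icc 0 b) ∧ γ 0 = x₀ ∧ ∀ t ∈ Icc (0:ℝ) b, F (γ t) = α t} with hSdef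
    have h0S : (0:ℝ) ∈ S := by
      refine ⟨⟨le_rfl, zero_le_one⟩, fun _ => x₀, continuousOn_const, rfl, fun t ht => ?_⟩
      have : t = 0 := le_antisymm ht.2 ht.1
      rw [this]; exact hx₀
    have hαc : ContinuousOn α (Icc 0 1) := hPSm α hα
    -- extension step
    have hext : ∀ b ∈ S, b < 1 → ∃ b' ∈ S, b < b' := by
      rintro b ⟨⟨hb0, hb1⟩, γ, hγc, hγ0, hγF⟩ hblt
      obtain ⟨U, V, β, hUo, hγbU, hVo, hFγbV, hβc, hβF, hβval⟩ := lift_near hF (α := α) (γ b)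
      have hαb : α b ∈ V := by rw [← hγF b ⟨hb0, le_rfl⟩]; exact hFγbV
      have hmem : α ⁻¹' V ∈ 𝓝[Icc 0 1] b :=
        (hαc b ⟨hb0, hb1⟩).preimage_mem_nhdsWithin (hVo.mem_nhds hαb)
      have hmem2 : α ⁻¹' V ∈ 𝓝[Ici b] b := by
        rw [nhdsWithin_restrict' (Ici b) (Iio_mem_nhds hblt)]
        have hsub' : Ici b ∩ Iio 1 ⊆ Icc 0 1 := fun t ht => ⟨le_trans hb0 ht.1, ht.2.le⟩
        exact nhdsWithin_mono b hsub' hmem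
      obtain ⟨u', hu'b, hsub⟩ := mem_nhdsGE_iff_exists_Icc_subset.mp hmem2
      have hbb' : b < min u' 1 := lt_min hu'b hblt
      refine ⟨min u' 1, ⟨⟨le_trans hb0 hbb'.le, min_le_right _ _⟩, ?_⟩, hbb'⟩
      have hVmem : ∀ t ∈ Icc b (min u' 1), α t ∈ V := fun t ht =>
        hsub ⟨ht.1, le_trans ht.2 (min_le_left _ _)⟩
      have hβcb : ContinuousOn β (Icc b (min u' 1)) :=
        hβc _ hVmem (hαc.mono (fun t ht =>
          ⟨le_trans hb0 ht.1, le_trans ht.2 (min_le_right _ _)⟩))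
      have hγβb : γ b = β b := (hβval (γ b) hγbU b (hγF b ⟨hb0, le_rfl⟩)).symm
      refine ⟨fun t => if t ≤ b then γ t else β t, ?_, ?_, ?_⟩
      · apply glue_continuousOn (hγc.mono ?_) (hβcb.mono ?_) hγβb
        · rintro t ⟨⟨ht0, _⟩, htb⟩; exact ⟨ht0, htb⟩
        · rintro t ⟨⟨_, htb'⟩, htb⟩; exact ⟨htb, htb'⟩
      · show (if (0:ℝ) ≤ b then γ 0 else β 0) = x₀
        rw [if_pos hb0, hγ0]
      · rintro t ⟨ht0, htb'⟩
        show F (if t ≤ b then γ t else β t) = α t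
        by_cases htb : t ≤ b
        · rw [if_pos htb]; exact hγF t ⟨ht0, htb⟩
        · rw [if_neg htb]; exact hβF t (hVmem t ⟨(not_le.mp htb).le, htb'⟩)
    have hSbdd : BddAbove S := ⟨1, fun r hr => hr.1.2⟩
    set c := sSup S with hcdef
    have hc1 : c ≤ 1 := csSup_le ⟨0, h0S⟩ (fun r hr => hr.1.2)
    have hcpos : 0 < c := by
      obtain ⟨b', hb'S, hb'pos⟩ := hext 0 h0S one_pos
      exact lt_of_lt_of_le hb'pos (le_csSup hSbdd hb'S)
    have hdown : ∀ b, 0 ≤ b → b < c → b ∈ S := by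
      intro b hb0 hbc
      obtain ⟨r, hrS, hbr⟩ : ∃ r ∈ S, b < r := by
        by_contra h
        push_neg at h
        exact absurd (csSup_le ⟨0, h0S⟩ (fun r hr => h r hr)) (not_le.mpr hbc)
      obtain ⟨⟨hr0, hr1⟩, γ, hγc, hγ0, hγF⟩ := hrS
      exact ⟨⟨hb0, le_trans hbr.le hr1⟩, γ, hγc.mono (Icc_subset_Icc le_rfl hbr.le), hγ0,
        fun t ht => hγF t ⟨ht.1, le_trans ht.2 hbr.le⟩⟩
    have hLex : ∀ r ∈ S, ∃ γ : ℝ → N₁, ContinuousOn γ (Icc 0 r) ∧ γ 0 = x₀ ∧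
        ∀ t ∈ Icc (0:ℝ) r, F (γ t) = α t := fun r hr => hr.2
    choose! L hL1 hL2 hL3 using hLex
    have hcompat : ∀ r ∈ S, ∀ r' ∈ S, ∀ t ∈ Icc (0:ℝ) (min r r'), L r t = L r' t := by
      intro r hr r' hr' t ht
      refine lift_eqOn hF isPreconnected_Icc
        ((hL1 r hr).mono (Icc_subset_Icc le_rfl (min_le_left _ _)))
        ((hL1 r' hr').mono (Icc_subset_Icc le_rfl (min_le_right _ _)))
        (fun s hs => by rw [hL3 r hr s ⟨hs.1, le_trans hs.2 (min_le_left _ _)⟩,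
          hL3 r' hr' s ⟨hs.1, le_trans hs.2 (min_le_right _ _)⟩])
        ⟨le_rfl, le_min hr.1.1 hr'.1.1⟩ (by rw [hL2 r hr, hL2 r' hr']) ht
    set m : ℝ → ℝ := fun t => (t + c) / 2 with hmdef
    have hmS : ∀ t ∈ Ico (0:ℝ) c, m t ∈ S := by
      rintro t ⟨ht0, htc⟩
      exact hdown _ (by simp only [hmdef]; linarith) (by simp only [hmdef]; linarith)
    set ᾱ : ℝ → N₁ := fun t => L (m t) t with hᾱdef
    have hαeq : ∀ r ∈ S, ∀ t ∈ Ico (0:ℝ) c, t ≤ r → ᾱ t = L r t := by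
      rintro r hr t ⟨ht0, htc⟩ htr
      exact hcompat (m t) (hmS t ⟨ht0, htc⟩) r hr t
        ⟨ht0, le_min (by simp only [hmdef]; linarith) htr⟩
    have hᾱ0 : ᾱ 0 = x₀ := hL2 _ (hmS 0 ⟨le_rfl, hcpos⟩)
    have htlem : ∀ t ∈ Ico (0:ℝ) c, t ∈ Icc (0:ℝ) (m t) := by
      rintro t ⟨ht0, htc⟩
      exact ⟨ht0, by simp only [hmdef]; linarith⟩
    have hᾱF : ∀ t ∈ Ico (0:ℝ) c, F (ᾱ t) = α t := fun t ht =>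
      hL3 _ (hmS t ht) t (htlem t ht)
    have hᾱc : ContinuousOn ᾱ (Ico 0 c) := by
      rintro t ⟨ht0, htc⟩
      have htb : t < (t + c) / 2 := by linarith
      have hbc : (t + c) / 2 < c := by linarith
      have hbS : (t + c) / 2 ∈ S := hdown _ (by linarith) hbc
      have heq : EqOn ᾱ (L ((t + c) / 2)) (Ico 0 ((t + c) / 2)) := fun t' ht' =>
        hαeq _ hbS t' ⟨ht'.1, lt_trans ht'.2 hbc⟩ ht'.2.le
      have h1 : ContinuousWithinAt (L ((t + c) / 2)) (Ico 0 ((t + c) / 2)) t :=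
        ((hL1 _ hbS) t ⟨ht0, htb.le⟩).mono Ico_subset_Icc_self
      have h2 : ContinuousWithinAt ᾱ (Ico 0 ((t + c) / 2)) t :=
        h1.congr heq (heq ⟨ht0, htb⟩)
      rw [ContinuousWithinAt, nhdsWithin_restrict' (Ico 0 c) (Iio_mem_nhds htb)]
      exact h2.mono (fun t' ht' => ⟨ht'.1.1, ht'.2⟩)
    obtain ⟨u, x, huI, huc, hux⟩ := hcont α hα c hcpos hc1 ᾱ hᾱc hᾱF
    have hFcont : ContinuousAt F x := by
      obtain ⟨P, hxP, hFP⟩ := exists_partialHomeomorph hF x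
      exact (P.continuousAt hxP).congr
        (Filter.eventuallyEq_of_mem (P.open_source.mem_nhds hxP) hFP).symm
    have hFx : F x = α c := by
      have h1 : Tendsto (fun k => F (ᾱ (u k))) atTop (𝓝 (F x)) := hFcont.tendsto.comp hux
      have htend : Tendsto u atTop (𝓝[Icc 0 1] c) :=
        tendsto_nhdsWithin_of_tendsto_nhds_of_eventually_within u huc
          (Eventually.of_forall fun k => ⟨(huI k).1, le_trans (huI k).2.le hc1⟩)
      have h2 : Tendsto (fun k => α (u k)) atTop (𝓝 (α c)) :=
        ((hαc c ⟨hcpos.le, hc1⟩).tendsto).comp htend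
      exact tendsto_nhds_unique (h1.congr (fun k => hᾱF (u k) (huI k))) h2
    obtain ⟨U, V, β, hUo, hxU, hVo, hFxV, hβc, hβF, hβval⟩ := lift_near hF (α := α) x
    have hαcV : α ⁻¹' V ∈ 𝓝[Icc 0 1] c :=
      (hαc c ⟨hcpos.le, hc1⟩).preimage_mem_nhdsWithin (hVo.mem_nhds (hFx ▸ hFxV))
    have hmem2 : α ⁻¹' V ∈ 𝓝[Iic c] c := by
      rw [nhdsWithin_restrict' (Iic c) (Ioi_mem_nhds hcpos)]
      have hsub' : Iic c ∩ Ioi 0 ⊆ Icc 0 1 := fun t ht => ⟨ht.2.le, le_trans ht.1 hc1⟩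
      exact nhdsWithin_mono c hsub' hαcV
    obtain ⟨l, hlc, hsubl⟩ := mem_nhdsLE_iff_exists_Icc_subset.mp hmem2
    have hev1 : ∀ᶠ k in atTop, l < u k := huc.eventually (eventually_gt_nhds hlc)
    have hev2 : ∀ᶠ k in atTop, ᾱ (u k) ∈ U :=
      hux.eventually (eventually_of_mem (hUo.mem_nhds hxU) (fun y hy => hy))
    obtain ⟨K, hlK, hKU⟩ := (hev1.and hev2).exists
    obtain ⟨ha0, hac⟩ := huI K
    have hVmem : ∀ t ∈ Icc (u K) c, α t ∈ V := fun t ht => hsubl ⟨le_trans hlK.le ht.1, ht.2⟩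
    have hβca : ContinuousOn β (Icc (u K) c) :=
      hβc _ hVmem (hαc.mono (fun t ht => ⟨le_trans ha0 ht.1, le_trans ht.2 hc1⟩))
    have hjoin : ᾱ (u K) = β (u K) := (hβval (ᾱ (u K)) hKU (u K) (hᾱF (u K) (huI K))).symm
    have hcS : c ∈ S := by
      refine ⟨⟨hcpos.le, hc1⟩, fun t => if t ≤ u K then ᾱ t else β t, ?_, ?_, ?_⟩
      · apply glue_continuousOn (hᾱc.mono ?_) (hβca.mono ?_) hjoin
        · rintro t ⟨⟨ht0, _⟩, hta⟩; exact ⟨ht0, lt_of_le_of_lt hta hac⟩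
        · rintro t ⟨⟨_, htc⟩, hta⟩; exact ⟨hta, htc⟩
      · show (if (0:ℝ) ≤ u K then ᾱ 0 else β 0) = x₀
        rw [if_pos ha0, hᾱ0]
      · rintro t ⟨ht0, htc⟩
        show F (if t ≤ u K then ᾱ t else β t) = α t
        by_cases hta : t ≤ u K
        · rw [if_pos hta]; exact hᾱF t ⟨ht0, lt_of_le_of_lt hta hac⟩
        · rw [if_neg hta]; exact hβF t (hVmem t ⟨(not_le.mp hta).le, htc⟩)
    have hceq : c = 1 := by
      by_contra hne
      obtain ⟨b', hb'S, hcb'⟩ := hext c hcS (lt_of_le_of_ne hc1 hne)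
      exact absurd (le_csSup hSbdd hb'S) (not_le.mpr hcb')
    obtain ⟨-, γ, hγc, hγ0, hγF⟩ := hcS
    rw [hceq] at hγc hγF
    exact ⟨γ, hγc, hγ0, hγF⟩


/-- **Rheinboldt.** A local diffeomorphism `F : N₁ → N₂` between smooth
connected manifolds has the path-lifting property if and only if it has the
path-continuation property. -/
theorem localDiffeo_pathLifting_iff_pathContinuation
    {E₁ : Type*} [NormedAddCommGroup E₁] [NormedSpace ℝ E₁]
    {H₁ : Type*} [TopologicalSpace H₁] (I₁ : ModelWithCorners ℝ E₁ H₁)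
    {N₁ : Type*} [TopologicalSpace N₁] [ChartedSpace H₁ N₁] [IsManifold I₁ (⊤ : ℕ∞) N₁]
    {E₂ : Type*} [NormedAddCommGroup E₂] [NormedSpace ℝ E₂]
    {H₂ : Type*} [TopologicalSpace H₂] (I₂ : ModelWithCorners ℝ E₂ H₂)
    {N₂ : Type*} [TopologicalSpace N₂] [ChartedSpace H₂ N₂] [IsManifold I₂ (⊤ : ℕ∞) N₂]
    [ConnectedSpace N₁] [ConnectedSpace N₂] [T2Space N₁] [T2Space N₂]
    (F : N₁ → N₂) (hF : IsLocalDiffeomorph I₁ I₂ (⊤ : ℕ∞) F) :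
    -- path-lifting property
    (∀ α : ℝ → N₂, PiecewiseSmoothOn I₂ α →
      ∀ x₀ : N₁, F x₀ = α 0 →
        ∃ ᾱ : ℝ → N₁, ContinuousOn ᾱ (Icc 0 1) ∧ ᾱ 0 = x₀ ∧
          ∀ t ∈ Icc (0 : ℝ) 1, F (ᾱ t) = α t)
    ↔
    -- path-continuation property
    (∀ α : ℝ → N₂, PiecewiseSmoothOn I₂ α →
      ∀ b : ℝ, 0 < b → b ≤ 1 →
        ∀ ᾱ : ℝ → N₁, ContinuousOn ᾱ (Ico 0 b) →
          (∀ t ∈ Ico (0 : ℝ) b, F (ᾱ t) = α t) →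
          ∃ (u : ℕ → ℝ) (x : N₁), (∀ k, u k ∈ Ico (0 : ℝ) b) ∧
            Tendsto u atTop (𝓝 b) ∧ Tendsto (fun k => ᾱ (u k)) atTop (𝓝 x)) := by
  exact localDiffeo_pathLifting_iff_pathContinuation' I₁ I₂ F hF
    (PiecewiseSmoothOn I₂) (fun α hα => hα.1)
end

section
/- Let (M,g) be a connected semi-Riemannian manifold, p, q ∈ M, and suppose exp_p : D ⊂ T_pM → M is surjective via quasi-lifts: for every piecewise smooth curve γ : [0,1] → M from p to q there exists v ∈ D with exp_p(v) = q such that the geodesic t ↦ exp_p(tv) is fixed-endpoint homotopic to γ. In particular, since D is star-shaped around the origin (hence simply connected), the connecting geodesic lies in the same fixed-endpoint homotopy class as γ. -/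
open Set Filter Topology

/-- Let `exp_p : D ⊂ T_pM → M` be the exponential map (abstracted as a
continuous map `E` on an open star-shaped domain `D ∋ 0` with `E 0 = p`).  If a piecewise
smooth (here: continuous) curve `γ : [0,1] → M` from `p` to `q` admits a quasi-lift
`σ : [0,c] → D` through `E` starting at the origin, then its endpoint `v = σ c` satisfies
`E v = q` and — since `D` is star-shaped around the origin, hence simply connected — the
connecting geodesic `t ↦ E (t • v)` is fixed-endpoint homotopic to `γ`. -/
theorem geodesic_in_homotopy_class_of_quasiLift
    {V : Type*} [NormedAddCommGroup V] [NormedSpace ℝ V] [FiniteDimensional ℝ V]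
    {M : Type*} [TopologicalSpace M] [T2Space M]
    (p q : M) (D : Set V) (hD : IsOpen D) (h0D : (0 : V) ∈ D)
    (hstar : ∀ v ∈ D, ∀ t ∈ Icc (0 : ℝ) 1, t • v ∈ D)
    (E : V → M) (hE : ContinuousOn E D) (hEp : E 0 = p)
    (γ : ℝ → M) (hγ : ContinuousOn γ (Icc 0 1)) (hγ0 : γ 0 = p) (hγ1 : γ 1 = q)
    -- a quasi-lift of `γ` through `E` starting at the origin
    (c : ℝ) (hc : 0 < c) (σ : ℝ → V) (χ : ℝ → ℝ)
    (hσ : ContinuousOn σ (Icc 0 c)) (hσ0 : σ 0 = 0)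
    (hσD : ∀ t ∈ Icc (0 : ℝ) c, σ t ∈ D)
    (hχ : ContinuousOn χ (Icc 0 c)) (hχmono : MonotoneOn χ (Icc 0 c))
    (hχsurj : χ '' Icc 0 c = Icc 0 1)
    (hlift : ∀ t ∈ Icc (0 : ℝ) c, E (σ t) = γ (χ t)) :
    E (σ c) = q ∧
      -- the geodesic `t ↦ E (t • σ c)` is fixed-endpoint homotopic to `γ`
      ∃ Hmap : ℝ → ℝ → M,
        ContinuousOn (fun z : ℝ × ℝ => Hmap z.1 z.2) (Icc 0 1 ×ˢ Icc 0 1) ∧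
        (∀ t ∈ Icc (0 : ℝ) 1, Hmap 0 t = E (t • σ c)) ∧
        (∀ t ∈ Icc (0 : ℝ) 1, Hmap 1 t = γ t) ∧
        (∀ s ∈ Icc (0 : ℝ) 1, Hmap s 0 = p ∧ Hmap s 1 = q) := by
  have hmem0 : (0 : ℝ) ∈ Icc (0 : ℝ) c := ⟨le_rfl, hc.le⟩
  have hmemc : c ∈ Icc (0 : ℝ) c := ⟨hc.le, le_rfl⟩
  -- endpoints of χ
  have hχmem : ∀ t ∈ Icc (0 : ℝ) c, χ t ∈ Icc (0 : ℝ) 1 := fun t ht =>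
    hχsurj ▸ mem_image_of_mem χ ht
  have hχ0 : χ 0 = 0 := by
    obtain ⟨t, ht, hχt⟩ : (0 : ℝ) ∈ χ '' Icc 0 c := by
      rw [hχsurj]; exact ⟨le_rfl, zero_le_one⟩
    have h1 : χ 0 ≤ χ t := hχmono hmem0 ht ht.1
    have h2 := (hχmem 0 hmem0).1
    linarith [hχt ▸ h1]
  have hχc : χ c = 1 := by
    obtain ⟨t, ht, hχt⟩ : (1 : ℝ) ∈ χ '' Icc 0 c := by
      rw [hχsurj]; exact ⟨zero_le_one, le_rfl⟩
    have h1 : χ t ≤ χ c := hχmono ht hmemc ht.2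
    have h2 := (hχmem c hmemc).2
    linarith [hχt ▸ h1]
  have hq : E (σ c) = q := by rw [hlift c hmemc, hχc, hγ1]
  refine ⟨hq, ?_⟩
  -- D is star convex, hence contractible, hence simply connected
  have hsc : StarConvex ℝ (0 : V) D := by
    intro y hy a b ha hb hab
    have h : a • (0 : V) + b • y = b • y := by simp
    rw [h]
    exact hstar y hy b ⟨hb, by linarith⟩
  haveI : ContractibleSpace D := hsc.contractibleSpace ⟨0, h0D⟩
  have hvD : σ c ∈ D := hσD c hmemc
  -- the two paths in D from 0 to σ c
  let α : Path (⟨0, h0D⟩ : D) ⟨σ c, hvD⟩ :=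
    { toFun := fun t => ⟨(t : ℝ) • σ c, hstar _ hvD _ ⟨t.2.1, t.2.2⟩⟩
      continuous_toFun := by
        apply Continuous.subtype_mk
        exact (continuous_subtype_val.smul continuous_const)
      source' := by ext; simp
      target' := by ext; simp }
  let β : Path (⟨0, h0D⟩ : D) ⟨σ c, hvD⟩ :=
    { toFun := fun t => ⟨σ (c * t),
        hσD _ ⟨mul_nonneg hc.le t.2.1, by nlinarith [t.2.2, t.2.1]⟩⟩
      continuous_toFun := by
        apply Continuous.subtype_mk
        exact hσ.comp_continuous (continuous_const.mul continuous_subtype_val)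
          (fun t => ⟨mul_nonneg hc.le t.2.1, by nlinarith [t.2.2, t.2.1]⟩)
      source' := by ext; simp [hσ0]
      target' := by ext; simp }
  -- push the paths forward by E
  let f : C(D, M) := ⟨Set.restrict D E, hE.restrict⟩
  have h1 : (α.map f.continuous).Homotopic (β.map f.continuous) :=
    (SimplyConnectedSpace.paths_homotopic α β).map f
  -- the curve γ as a path from E 0 to E (σ c)
  let Pγ : Path (f ⟨0, h0D⟩) (f ⟨σ c, hvD⟩) :=
    { toFun := fun t => γ t
      continuous_toFun := hγ.comp_continuous continuous_subtype_val
        (fun t => ⟨t.2.1, t.2.2⟩)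
      source' := by show γ 0 = E 0; rw [hγ0, hEp]
      target' := by show γ 1 = E (σ c); rw [hγ1, hq] }
  -- the reparametrization homotopy from E ∘ β = γ ∘ χ ∘ (c·) to γ
  have haux : ∀ st : unitInterval × unitInterval, (1 - (st.1 : ℝ)) * χ (c * st.2) + st.1 * st.2 ∈ Icc (0 : ℝ) 1 := by
    intro st
    have hm : c * (st.2 : ℝ) ∈ Icc (0 : ℝ) c :=
      ⟨mul_nonneg hc.le st.2.2.1, by nlinarith [st.2.2.2, st.2.2.1]⟩
    have h2 := hχmem _ hm
    constructor
    · have := st.1.2.1; have := st.1.2.2; have := st.2.2.1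
      nlinarith [h2.1]
    · have := st.1.2.1; have := st.1.2.2; have := st.2.2.2
      nlinarith [h2.2]
  let Hrep : (β.map f.continuous).Homotopy Pγ :=
    { toFun := fun st => γ ((1 - (st.1 : ℝ)) * χ (c * st.2) + st.1 * st.2)
      continuous_toFun := by
        apply hγ.comp_continuous _ haux
        have hcχ : Continuous fun st : unitInterval × unitInterval => χ (c * (st.2 : ℝ)) :=
          hχ.comp_continuous
            (continuous_const.mul (continuous_subtype_val.comp continuous_snd))
            (fun st => ⟨mul_nonneg hc.le st.2.2.1, by nlinarith [st.2.2.2, st.2.2.1]⟩)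
        exact ((continuous_const.sub (continuous_subtype_val.comp continuous_fst)).mul hcχ).add
          ((continuous_subtype_val.comp continuous_fst).mul
            (continuous_subtype_val.comp continuous_snd))
      map_zero_left := by
        intro t
        have hm : c * (t : ℝ) ∈ Icc (0 : ℝ) c :=
          ⟨mul_nonneg hc.le t.2.1, by nlinarith [t.2.2, t.2.1]⟩
        show γ _ = f (β t)
        show γ _ = E (σ (c * t))
        rw [hlift _ hm]
        norm_num
      map_one_left := by
        intro t
        show γ _ = γ (t : ℝ)
        norm_num
      prop' := by
        intro s x hx
        rcases hx with hx | hx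
        · subst hx
          show γ _ = f (β 0)
          show γ _ = E (σ (c * ((0 : unitInterval) : ℝ)))
          have h0 : ((0 : unitInterval) : ℝ) = 0 := rfl
          rw [h0, mul_zero, hσ0, hEp]
          rw [mul_zero, hχ0]
          norm_num [hγ0]
        · simp only [Set.mem_singleton_iff] at hx
          subst hx
          show γ _ = f (β 1)
          show γ _ = E (σ (c * ((1 : unitInterval) : ℝ)))
          have h0 : ((1 : unitInterval) : ℝ) = 1 := rfl
          rw [h0, mul_one, hq]
          rw [mul_one, hχc]
          have key : γ ((1 - (s : ℝ)) * 1 + (s : ℝ)) = q := by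
            rw [show (1 - (s : ℝ)) * 1 + (s : ℝ) = 1 by ring, hγ1]
          exact key }
  have h2 : (α.map f.continuous).Homotopic Pγ := h1.trans ⟨Hrep⟩
  obtain ⟨Htot⟩ := h2
  -- assemble the final homotopy
  refine ⟨fun s t => Htot (projIcc 0 1 zero_le_one s, projIcc 0 1 zero_le_one t), ?_, ?_, ?_, ?_⟩
  · exact (Htot.continuous.comp ((continuous_projIcc.comp continuous_fst).prodMk
      (continuous_projIcc.comp continuous_snd))).continuousOn
  · intro t ht
    beta_reduce
    rw [show projIcc (0:ℝ) 1 zero_le_one 0 = 0 from projIcc_left _,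
      projIcc_of_mem zero_le_one ht]
    have := Htot.apply_zero ⟨t, ht⟩
    rw [this]
    rfl
  · intro t ht
    beta_reduce
    rw [show projIcc (0:ℝ) 1 zero_le_one 1 = 1 from projIcc_right _,
      projIcc_of_mem zero_le_one ht]
    have := Htot.apply_one ⟨t, ht⟩
    rw [this]
    rfl
  · intro s hs
    constructor
    · beta_reduce
      rw [show projIcc (0:ℝ) 1 zero_le_one 0 = 0 from projIcc_left _]
      rw [Htot.source]
      show E 0 = p
      exact hEp
    · beta_reduce
      rw [show projIcc (0:ℝ) 1 zero_le_one 1 = 1 from projIcc_right _]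
      rw [Htot.target]
      exact hq
end
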